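/- Let α, β ∈ ℤ^s be linearly independent vectors, each with both positive and negative entries, such that γ = α + β also has both positive and negative entries. Then x^{γ₊} − x^{γ₋} belongs to the ideal generated by x^{α₊} − x^{α₋} and x^{β₊} − x^{β₋} in K[x_1,…,x_s] if and only if supp(α₊) ∩ supp(β₋) = ∅ or supp(α₋) ∩ supp(β₊) = ∅. -/

import Mathlib

open MvPolynomial

/-- For `v ∈ ℤ^s`, the monomial `x^{v₊}` with exponents the positive part of `v`. -/
noncomputable def posMonomial {s : ℕ} (K : Type*) [Field K] (v : Fin s → ℤ) :
    MvPolynomial (Fin s) K :=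
  ∏ i, X i ^ (v i).toNat

/-- For `v ∈ ℤ^s`, the binomial `x^{v₊} - x^{v₋}`. -/
noncomputable def binomOf {s : ℕ} (K : Type*) [Field K] (v : Fin s → ℤ) :
    MvPolynomial (Fin s) K :=
  posMonomial K v - posMonomial K (-v)

/-- `v` has both positive and negative entries. -/
def HasMixedSigns {s : ℕ} (v : Fin s → ℤ) : Prop :=
  (∃ i, 0 < v i) ∧ (∃ i, v i < 0)

namespace ToricAux

variable {s : ℕ}

/-- A function `Fin s → ℕ` as a finitely supported function. -/
noncomputable def toF (a : Fin s → ℕ) : Fin s →₀ ℕ := Finsupp.equivFunOnFinite.symm a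

@[simp] lemma toF_apply (a : Fin s → ℕ) (i : Fin s) : toF a i = a i := rfl

@[simp] lemma coe_toF (a : Fin s → ℕ) : ⇑(toF a) = a := rfl

lemma prodXpow_eq_monomial (K : Type*) [Field K] (a : Fin s → ℕ) :
    (∏ i, (X i : MvPolynomial (Fin s) K) ^ a i) = monomial (toF a) 1 := by
  rw [← prod_X_pow_eq_monomial]
  refine (Finset.prod_subset (Finset.subset_univ _) ?_).symm
  intro i _ hi
  have h0 : a i = 0 := Finsupp.notMem_support_iff.mp hi
  rw [h0, pow_zero]

lemma posMonomial_eq (K : Type*) [Field K] (v : Fin s → ℤ) :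
    posMonomial K v = ∏ i, (X i : MvPolynomial (Fin s) K) ^ (v i).toNat := rfl

lemma posMonomial_neg_eq (K : Type*) [Field K] (v : Fin s → ℤ) :
    posMonomial K (-v) = ∏ i, (X i : MvPolynomial (Fin s) K) ^ (-v i).toNat := rfl

/-- Key factorization: if `a - b = v` (in `ℤ^s`), then `x^a - x^b = x^{a ∧ b} (x^{v₊}-x^{v₋})`. -/
lemma sub_eq_mul_binom (K : Type*) [Field K] (a b : Fin s → ℕ) (v : Fin s → ℤ)
    (h : ∀ i, (a i : ℤ) - b i = v i) :
    (∏ i, (X i : MvPolynomial (Fin s) K) ^ a i) - ∏ i, (X i : MvPolynomial (Fin s) K) ^ b i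
      = (∏ i, (X i : MvPolynomial (Fin s) K) ^ min (a i) (b i)) * binomOf K v := by
  have ha : ∀ i, a i = min (a i) (b i) + (v i).toNat := by
    intro i
    have h' := h i
    have h1 : ((v i).toNat : ℤ) = max (v i) 0 := Int.toNat_eq_max _
    have := Nat.cast_min (a i) (b i) (α := ℤ)
    omega
  have hb : ∀ i, b i = min (a i) (b i) + (-v i).toNat := by
    intro i
    have h' := h i
    have h1 : ((-v i).toNat : ℤ) = max (-v i) 0 := Int.toNat_eq_max _
    have := Nat.cast_min (a i) (b i) (α := ℤ)
    omega
  rw [binomOf, posMonomial_eq, posMonomial_neg_eq, mul_sub, ← Finset.prod_mul_distrib,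
    ← Finset.prod_mul_distrib]
  congr 1
  · exact Finset.prod_congr rfl fun i _ => by rw [← pow_add, ← ha i]
  · exact Finset.prod_congr rfl fun i _ => by rw [← pow_add, ← hb i]

/-- Backward direction, one of the two symmetric cases. -/
lemma mem_span_of_cond (K : Type*) [Field K] (α β : Fin s → ℤ)
    (h : ∀ i, ¬(0 < α i ∧ β i < 0)) :
    binomOf K (α + β) ∈ Ideal.span {binomOf K α, binomOf K β} := by
  set γ := α + β with hγdef
  have hγ : ∀ i, γ i = α i + β i := fun i => rfl
  have hc : ∀ i, 0 ≤ max (γ i) 0 - α i := by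
    intro i
    have := h i
    have := hγ i
    omega
  set c : Fin s → ℕ := fun i => (max (γ i) 0 - α i).toNat with hcdef
  have hcc : ∀ i, (c i : ℤ) = max (γ i) 0 - α i := by
    intro i
    simp only [hcdef]
    exact Int.toNat_of_nonneg (hc i)
  set a : Fin s → ℕ := fun i => (γ i).toNat with hadef
  set b : Fin s → ℕ := fun i => (-γ i).toNat with hbdef
  have haa : ∀ i, (a i : ℤ) = max (γ i) 0 := fun i => Int.toNat_eq_max _
  have hbb : ∀ i, (b i : ℤ) = max (-γ i) 0 := fun i => Int.toNat_eq_max _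
  have key : binomOf K γ
      = ((∏ i, (X i : MvPolynomial (Fin s) K) ^ a i) - ∏ i, (X i : MvPolynomial (Fin s) K) ^ c i)
      + ((∏ i, (X i : MvPolynomial (Fin s) K) ^ c i) - ∏ i, (X i : MvPolynomial (Fin s) K) ^ b i) := by
    rw [sub_add_sub_cancel, binomOf, posMonomial_eq, posMonomial_neg_eq]
  rw [key]
  have h1 : (∏ i, (X i : MvPolynomial (Fin s) K) ^ a i) - ∏ i, (X i : MvPolynomial (Fin s) K) ^ c i
      = (∏ i, (X i : MvPolynomial (Fin s) K) ^ min (a i) (c i)) * binomOf K α := by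
    refine sub_eq_mul_binom K a c α fun i => ?_
    rw [haa i, hcc i]; ring
  have h2 : (∏ i, (X i : MvPolynomial (Fin s) K) ^ c i) - ∏ i, (X i : MvPolynomial (Fin s) K) ^ b i
      = (∏ i, (X i : MvPolynomial (Fin s) K) ^ min (c i) (b i)) * binomOf K β := by
    refine sub_eq_mul_binom K c b β fun i => ?_
    rw [hcc i, hbb i]
    have := hγ i
    omega
  rw [h1, h2]
  refine Ideal.add_mem _ (Ideal.mul_mem_left _ _ ?_) (Ideal.mul_mem_left _ _ ?_)
  · exact Ideal.subset_span (by simp)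
  · exact Ideal.subset_span (by simp)

/-! ### Forward direction -/

/-- One step of the lattice walk: `a - b = α` or `a - b = β`. -/
def stepRel (α β : Fin s → ℤ) (a b : Fin s → ℕ) : Prop :=
  (fun i => (a i : ℤ) - b i) = α ∨ (fun i => (a i : ℤ) - b i) = β

/-- The quotient of `ℕ^s` by the walk equivalence. -/
def WalkQuot (α β : Fin s → ℤ) : Type _ :=
  Quotient (Relation.EqvGen.setoid (stepRel α β))

def wq (α β : Fin s → ℤ) (a : Fin s → ℕ) : WalkQuot α β :=
  Quotient.mk (Relation.EqvGen.setoid (stepRel α β)) a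

/-- The monomial-collapsing linear map. -/
noncomputable def phi (K : Type*) [Field K] (α β : Fin s → ℤ) :
    MvPolynomial (Fin s) K →ₗ[K] (WalkQuot α β →₀ K) :=
  Finsupp.lmapDomain K K (fun d : Fin s →₀ ℕ => wq α β ⇑d) ∘ₗ
    (AddMonoidAlgebra.coeffLinearEquiv K).toLinearMap

lemma phi_monomial (K : Type*) [Field K] (α β : Fin s → ℤ) (d : Fin s →₀ ℕ) (k : K) :
    phi K α β (monomial d k) = Finsupp.single (wq α β ⇑d) k := by
  show Finsupp.mapDomain _ (AddMonoidAlgebra.coeff (monomial d k)) = _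
  rw [← MvPolynomial.single_eq_monomial, AddMonoidAlgebra.coeff_single, Finsupp.mapDomain_single]

lemma wq_step (α β : Fin s → ℤ) {a b : Fin s → ℕ} (h : stepRel α β a b) :
    wq α β a = wq α β b :=
  Quotient.sound (Relation.EqvGen.rel _ _ h)

lemma phi_mul_binom (K : Type*) [Field K] (α β : Fin s → ℤ) (v : Fin s → ℤ)
    (hv : v = α ∨ v = β) (p : MvPolynomial (Fin s) K) :
    phi K α β (p * binomOf K v) = 0 := by
  induction p using MvPolynomial.induction_on' with
  | add p q hp hq => rw [add_mul, map_add, hp, hq, add_zero]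
  | monomial u k =>
    have hbv : binomOf K v = monomial (toF fun i => (v i).toNat) 1
        - monomial (toF fun i => (-v i).toNat) 1 := by
      rw [binomOf, posMonomial_eq, posMonomial_neg_eq, prodXpow_eq_monomial,
        prodXpow_eq_monomial]
    rw [hbv, mul_sub, monomial_mul, monomial_mul, mul_one, map_sub, phi_monomial, phi_monomial]
    have hstep : stepRel α β ⇑(u + toF fun i => (v i).toNat)
        ⇑(u + toF fun i => (-v i).toNat) := by
      have : (fun i => ((⇑(u + toF fun i => (v i).toNat) : Fin s → ℕ) i : ℤ)
          - ((⇑(u + toF fun i => (-v i).toNat) : Fin s → ℕ) i : ℤ)) = v := by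
        funext i
        simp only [Finsupp.coe_add, Pi.add_apply, coe_toF, Nat.cast_add]
        have := Int.toNat_sub_toNat_neg (v i)
        omega
      rcases hv with rfl | rfl
      · exact Or.inl this
      · exact Or.inr this
    rw [wq_step α β hstep, sub_self]

section Comb

variable (α β : Fin s → ℤ)

/-- Feasibility: `a = γ₊ + m α + n β`. -/
def Feas (a : Fin s → ℕ) (m n : ℤ) : Prop :=
  ∀ i, (a i : ℤ) = max (α i + β i) 0 + m * α i + n * β i

lemma no_feas_neg_one (i₀ j₀ : Fin s) (hi : 0 < α i₀ ∧ β i₀ < 0) (hj : α j₀ < 0 ∧ 0 < β j₀)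
    (a : Fin s → ℕ) (m n : ℤ) (hf : Feas α β a m n) : m + n ≠ -1 := by
  intro hmn
  rcases le_or_gt 0 m with hm | hm
  · -- n ≤ -1, use j₀
    have hn : n ≤ -1 := by omega
    have h1 := hf j₀
    have h2 : m * α j₀ ≤ 0 := mul_nonpos_of_nonneg_of_nonpos hm (le_of_lt hj.1)
    have h3 : n * β j₀ ≤ (-1) * β j₀ :=
      mul_le_mul_of_nonneg_right hn (le_of_lt hj.2)
    have h4 : (0:ℤ) ≤ (a j₀ : ℤ) := Int.natCast_nonneg _
    have h5 : max (α j₀ + β j₀) 0 < β j₀ := max_lt (by omega) hj.2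
    omega
  · -- m ≤ -1, use i₀
    have hm' : m ≤ -1 := by omega
    have hn : 0 ≤ n := by omega
    have h1 := hf i₀
    have h2 : n * β i₀ ≤ 0 := mul_nonpos_of_nonneg_of_nonpos hn (le_of_lt hi.2)
    have h3 : m * α i₀ ≤ (-1) * α i₀ :=
      mul_le_mul_of_nonneg_right hm' (le_of_lt hi.1)
    have h4 : (0:ℤ) ≤ (a i₀ : ℤ) := Int.natCast_nonneg _
    have h5 : max (α i₀ + β i₀) 0 < α i₀ := max_lt (by omega) hi.1
    omega

lemma feas_unique (hind : LinearIndependent ℤ ![α, β]) (a : Fin s → ℕ) (m n m' n' : ℤ)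
    (h : Feas α β a m n) (h' : Feas α β a m' n') : m = m' ∧ n = n' := by
  have key : (m - m') • α + (n - n') • β = 0 := by
    funext i
    have h1 := h i
    have h2 := h' i
    simp only [Pi.add_apply, Pi.smul_apply, smul_eq_mul, Pi.zero_apply]
    nlinarith [h1, h2]
  have := (LinearIndependent.pair_iff.mp hind) (m - m') (n - n') key
  omega

/-- The invariant: reachable from `γ₊` keeping `m + n ≥ 0`. -/
def Good (a : Fin s → ℕ) : Prop := ∃ m n : ℤ, Feas α β a m n ∧ 0 ≤ m + n

lemma feas_of_step {a b : Fin s → ℕ} (h : stepRel α β a b) (m n : ℤ) (hf : Feas α β a m n) :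
    Feas α β b (m - 1) n ∨ Feas α β b m (n - 1) := by
  rcases h with h | h
  · left
    intro i
    have h1 := hf i
    have h2 : (a i : ℤ) - b i = α i := congrFun h i
    nlinarith [h1, h2]
  · right
    intro i
    have h1 := hf i
    have h2 : (a i : ℤ) - b i = β i := congrFun h i
    nlinarith [h1, h2]

lemma feas_of_step' {a b : Fin s → ℕ} (h : stepRel α β a b) (m n : ℤ) (hf : Feas α β b m n) :
    Feas α β a (m + 1) n ∨ Feas α β a m (n + 1) := by
  rcases h with h | h
  · left
    intro i
    have h1 := hf i
    have h2 : (a i : ℤ) - b i = α i := congrFun h i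
    nlinarith [h1, h2]
  · right
    intro i
    have h1 := hf i
    have h2 : (a i : ℤ) - b i = β i := congrFun h i
    nlinarith [h1, h2]

lemma good_step (i₀ j₀ : Fin s) (hi : 0 < α i₀ ∧ β i₀ < 0) (hj : α j₀ < 0 ∧ 0 < β j₀)
    {a b : Fin s → ℕ} (h : stepRel α β a b) : Good α β a ↔ Good α β b := by
  constructor
  · rintro ⟨m, n, hf, hmn⟩
    rcases feas_of_step α β h m n hf with hf' | hf'
    · exact ⟨m - 1, n, hf', by
        have := no_feas_neg_one α β i₀ j₀ hi hj b (m - 1) n hf'; omega⟩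
    · exact ⟨m, n - 1, hf', by
        have := no_feas_neg_one α β i₀ j₀ hi hj b m (n - 1) hf'; omega⟩
  · rintro ⟨m, n, hf, hmn⟩
    rcases feas_of_step' α β h m n hf with hf' | hf'
    · exact ⟨m + 1, n, hf', by omega⟩
    · exact ⟨m, n + 1, hf', by omega⟩

lemma good_eqvGen (i₀ j₀ : Fin s) (hi : 0 < α i₀ ∧ β i₀ < 0) (hj : α j₀ < 0 ∧ 0 < β j₀)
    {a b : Fin s → ℕ} (h : Relation.EqvGen (stepRel α β) a b) :
    Good α β a ↔ Good α β b := by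
  induction h with
  | rel x y hxy => exact good_step α β i₀ j₀ hi hj hxy
  | refl x => rfl
  | symm x y _ ih => exact ih.symm
  | trans x y z _ _ ih1 ih2 => exact ih1.trans ih2

end Comb

end ToricAux

open ToricAux in
/-- Let `α, β ∈ ℤ^s` be linearly independent vectors, each with both positive
and negative entries, such that `γ = α + β` also has both positive and negative entries.
Then `x^{γ₊} - x^{γ₋}` belongs to the ideal generated by `x^{α₊} - x^{α₋}` and
`x^{β₊} - x^{β₋}` if and only if `supp(α₊) ∩ supp(β₋) = ∅` or `supp(α₋) ∩ supp(β₊) = ∅`. -/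
theorem toric_splittings_stmt2 {s : ℕ} (K : Type*) [Field K] (α β : Fin s → ℤ)
    (hind : LinearIndependent ℤ ![α, β])
    (hα : HasMixedSigns α) (hβ : HasMixedSigns β) (hγ : HasMixedSigns (α + β)) :
    binomOf K (α + β) ∈ Ideal.span {binomOf K α, binomOf K β} ↔
      ((∀ i, ¬(0 < α i ∧ β i < 0)) ∨ (∀ i, ¬(α i < 0 ∧ 0 < β i))) := by
  constructor
  · intro hmem
    by_contra hcon
    push_neg at hcon
    obtain ⟨h1, h2⟩ := hcon
    obtain ⟨i₀, hi₀⟩ := h1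
    obtain ⟨j₀, hj₀⟩ := h2
    -- apply phi
    obtain ⟨p, q, hpq⟩ := Ideal.mem_span_pair.mp hmem
    have hphi : phi K α β (binomOf K (α + β)) = 0 := by
      rw [← hpq, map_add, phi_mul_binom K α β α (Or.inl rfl) p,
        phi_mul_binom K α β β (Or.inr rfl) q, add_zero]
    set γp : Fin s → ℕ := fun i => ((α + β) i).toNat with hγp
    set γm : Fin s → ℕ := fun i => (-(α + β) i).toNat with hγm
    have hb : binomOf K (α + β) = monomial (toF γp) 1 - monomial (toF γm) 1 := by
      rw [binomOf, posMonomial_eq, posMonomial_neg_eq, prodXpow_eq_monomial,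
        prodXpow_eq_monomial]
    rw [hb, map_sub, phi_monomial, phi_monomial, coe_toF, coe_toF, sub_eq_zero] at hphi
    have hq : wq α β γp = wq α β γm := by
      rcases (Finsupp.single_eq_single_iff _ _ _ _).mp hphi with ⟨h, _⟩ | ⟨h, _⟩
      · exact h
      · exact absurd h one_ne_zero
    have heqv : Relation.EqvGen (stepRel α β) γp γm := Quotient.exact hq
    have hγadd : ∀ i, (α + β) i = α i + β i := fun i => rfl
    have hgoodp : Good α β γp := by
      refine ⟨0, 0, fun i => ?_, by omega⟩
      have := Int.toNat_eq_max ((α + β) i)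
      have := hγadd i
      simp only [hγp]
      omega
    have hfeasm : Feas α β γm (-1) (-1) := by
      intro i
      have := Int.toNat_eq_max (-(α + β) i)
      have := hγadd i
      simp only [hγm]
      omega
    have hgoodm : Good α β γm :=
      (good_eqvGen α β i₀ j₀ hi₀ hj₀ heqv).mp hgoodp
    obtain ⟨m, n, hf, hmn⟩ := hgoodm
    have := feas_unique α β hind γm m n (-1) (-1) hf hfeasm
    omega
  · rintro (h | h)
    · exact mem_span_of_cond K α β h
    · rw [add_comm, Set.pair_comm]
      exact mem_span_of_cond K β α fun i => by have := h i; omega
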